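/- arXiv:1901.01301 — 7 statements merged into one kernel-verified Lean document; each statement's English description precedes it below -/
import Mathlib

section
/- Let Γ be a group, N a normal subgroup of Γ, Q = Γ/N the quotient group with projection π : Γ → Q, and s : Q → Γ a set-theoretic section of π (π(s(B)) = B for all B ∈ Q) with s(1) = 1. For μ ∈ Γ and B ∈ Q set ρ_μ(B) = s(B)·μ·s(B·π(μ))⁻¹, which lies in N, and let φ_μ : Q → Q be the bijection B ↦ B·π(μ). Let W be the wreath-product group whose underlying set is (Q → N) × Perm(Q) with multiplication (ρ,φ)·(σ,ψ) = (B ↦ ρ(B)·σ(φ(B)), ψ∘φ). Then the map θ : Γ → W defined by θ(μ) = (ρ_μ, φ_μ) is an injective group homomorphism (the Kaloujnin–Krasner embedding). -/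
/-- **The Kaloujnin–Krasner embedding.**
Let `Γ` be a group, `N ⊴ Γ`, `Q = Γ ⧸ N` with projection `π`, and `s : Q → Γ` a
set-theoretic section of `π` with `s 1 = 1`.  For `μ ∈ Γ` and `B ∈ Q` let
`ρ_μ(B) = s(B)·μ·s(B·π(μ))⁻¹ ∈ N` and let `φ_μ : Q → Q` be the bijection
`B ↦ B·π(μ)`.  Then the map `θ(μ) = (ρ_μ, φ_μ)` from `Γ` into the wreath product
whose underlying set is `(Q → N) × Perm Q` with multiplication
`(ρ,φ)·(σ,ψ) = (B ↦ ρ(B)·σ(φ(B)), ψ∘φ)` is an injective group homomorphism.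
(In `Equiv.Perm Q`, `ψ * φ` is the composition `ψ ∘ φ`.) -/
theorem kaloujnin_krasner_embedding
    {Γ : Type*} [Group Γ] (N : Subgroup Γ) [N.Normal]
    (s : Γ ⧸ N → Γ)
    (hs : ∀ B : Γ ⧸ N, (QuotientGroup.mk (s B) : Γ ⧸ N) = B)
    (hs1 : s 1 = 1) :
    ∃ θ : Γ → (Γ ⧸ N → N) × Equiv.Perm (Γ ⧸ N),
      -- the first component of `θ μ` is `ρ_μ`
      (∀ (μ : Γ) (B : Γ ⧸ N),
        ((θ μ).1 B : Γ) = s B * μ * (s (B * (QuotientGroup.mk μ : Γ ⧸ N)))⁻¹) ∧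
      -- the second component of `θ μ` is the bijection `φ_μ : B ↦ B·π(μ)`
      (∀ (μ : Γ) (B : Γ ⧸ N), (θ μ).2 B = B * (QuotientGroup.mk μ : Γ ⧸ N)) ∧
      -- `θ` is injective
      Function.Injective θ ∧
      -- `θ` is a homomorphism for the wreath-product multiplication
      (∀ μ ν : Γ,
        θ (μ * ν) =
          (fun B => (θ μ).1 B * (θ ν).1 ((θ μ).2 B), (θ ν).2 * (θ μ).2)) ∧
      -- `θ` sends the identity to the identity of the wreath product
      θ 1 = (fun _ => 1, 1) := by
  have mem : ∀ (μ : Γ) (B : Γ ⧸ N),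
      s B * μ * (s (B * (QuotientGroup.mk μ : Γ ⧸ N)))⁻¹ ∈ N := by
    intro μ B
    rw [← QuotientGroup.eq_one_iff]
    simp [hs, QuotientGroup.mk_mul]
  refine ⟨fun μ => (fun B => ⟨_, mem μ B⟩, Equiv.mulRight (QuotientGroup.mk μ)),
    fun μ B => rfl, fun μ B => rfl, ?_, ?_, ?_⟩
  · intro μ ν h
    have h1 := congrFun (congrArg Prod.fst h) 1
    have := congrArg (Subtype.val) h1
    simp only [hs1, one_mul] at this
    have h2 := congrArg (fun e : Equiv.Perm (Γ ⧸ N) => e 1) (congrArg Prod.snd h)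
    simp only [Equiv.coe_mulRight, one_mul] at h2
    rw [h2] at this
    exact mul_right_cancel this
  · intro μ ν
    ext B
    · simp only [Submonoid.coe_mul, Subgroup.coe_mul, Equiv.coe_mulRight,
        QuotientGroup.mk_mul]
      group
    · simp [mul_assoc, QuotientGroup.mk_mul]
  · refine Prod.ext ?_ ?_
    · funext B
      ext
      simp
    · ext B
      simp
end

section
/- Let Γ be a group and N a normal subgroup of finite index K, with quotient Q = Γ/N (so Q is finite of cardinality K), projection π : Γ → Q, and a section s : Q → Γ with s(1) = 1; for μ ∈ Γ and B ∈ Q set ρ_μ(B) = s(B)·μ·s(B·π(μ))⁻¹ ∈ N. Let h : N → ℝ be a function with defect at most D, i.e. |h(ab) − h(a) − h(b)| ≤ D for all a, b ∈ N. Define H : Γ → ℝ by H(μ) = Σ_{B ∈ Q} h(ρ_μ(B)). Then H is a quasimorphism with defect at most K·D, i.e. |H(μν) − H(μ) − H(ν)| ≤ K·D for all μ, ν ∈ Γ. -/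
/-- Let `N ⊴ Γ` have finite index `K` with finite quotient `Q = Γ ⧸ N`, let
`s : Q → Γ` be a section of the projection with `s 1 = 1`, and set
`ρ_μ(B) = s(B)·μ·s(B·π(μ))⁻¹ ∈ N`.  If `h : N → ℝ` has defect at most `D`,
then `H(μ) = ∑_{B ∈ Q} h(ρ_μ(B))` is a quasimorphism on `Γ` with defect at
most `K·D`. -/
theorem induced_quasimorphism_defect
    {Γ : Type*} [Group Γ] (N : Subgroup Γ) [N.Normal] [Fintype (Γ ⧸ N)]
    (K : ℕ) (hK : Fintype.card (Γ ⧸ N) = K)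
    (s : Γ ⧸ N → Γ)
    (hs : ∀ B : Γ ⧸ N, (QuotientGroup.mk (s B) : Γ ⧸ N) = B)
    (hs1 : s 1 = 1)
    (ρ : Γ → Γ ⧸ N → N)
    (hρ : ∀ (μ : Γ) (B : Γ ⧸ N),
      (ρ μ B : Γ) = s B * μ * (s (B * (QuotientGroup.mk μ : Γ ⧸ N)))⁻¹)
    (h : N → ℝ) (D : ℝ)
    (hD : ∀ a b : N, |h (a * b) - h a - h b| ≤ D)
    (H : Γ → ℝ)
    (hH : ∀ μ : Γ, H μ = ∑ B : Γ ⧸ N, h (ρ μ B)) :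
    ∀ μ ν : Γ, |H (μ * ν) - H μ - H ν| ≤ (K : ℝ) * D := by
  intro μ ν
  have key : ∀ B : Γ ⧸ N,
      ρ (μ * ν) B = ρ μ B * ρ ν (B * (QuotientGroup.mk μ : Γ ⧸ N)) := by
    intro B
    ext
    simp only [Subgroup.coe_mul, hρ, QuotientGroup.mk_mul, mul_assoc, inv_mul_cancel_left]
  have hrei : ∑ B : Γ ⧸ N, h (ρ ν B)
      = ∑ B : Γ ⧸ N, h (ρ ν (B * (QuotientGroup.mk μ : Γ ⧸ N))) :=
    (Fintype.sum_equiv (Equiv.mulRight (QuotientGroup.mk μ : Γ ⧸ N)) _ _ (fun B => rfl)).symm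
  rw [hH, hH, hH, hrei, ← Finset.sum_sub_distrib, ← Finset.sum_sub_distrib]
  calc |∑ B : Γ ⧸ N, (h (ρ (μ * ν) B) - h (ρ μ B)
          - h (ρ ν (B * (QuotientGroup.mk μ : Γ ⧸ N))))|
      ≤ ∑ B : Γ ⧸ N, |h (ρ (μ * ν) B) - h (ρ μ B)
          - h (ρ ν (B * (QuotientGroup.mk μ : Γ ⧸ N)))| :=
        Finset.abs_sum_le_sum_abs _ _
    _ ≤ ∑ _B : Γ ⧸ N, D := Finset.sum_le_sum fun B _ => by rw [key B]; exact hD _ _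
    _ = (K : ℝ) * D := by
        rw [Finset.sum_const, Finset.card_univ, hK, nsmul_eq_mul]
end

section
/- Let Γ be a group, (h_i)_{i∈ℕ} a sequence of functions h_i : Γ → ℝ, and (f_j)_{j∈ℕ} a sequence of elements of the commutator subgroup [Γ,Γ]. Assume: (i) for every γ ∈ Γ there is C(γ) with |h_i(γ)| ≤ C(γ) for all i; (ii) for all i > j and all integers d ≥ 1, h_i(f_j^d) = 0; (iii) for all j and all d ≥ 1, h_j(f_j^d) ≥ 0; (iv) for every j, sup_{d ≥ 1} h_j(f_j^d) = ∞. Let t = (t_i) be a real sequence with Σ_i |t_i| < ∞ which is not identically zero, and define h_t(γ) = Σ_i t_i·h_i(γ). Then for every group homomorphism φ : Γ → ℝ and every bounded function b : Γ → ℝ, the function h_t − φ − b is unbounded on Γ; in particular h_t is not the sum of a homomorphism and a bounded function. -/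
/-- Let `(h_i)` be pointwise uniformly bounded functions on a group `Γ` and
`(f_j)` elements of the commutator subgroup `[Γ,Γ]` such that `h_i(f_j^d) = 0`
for `i > j`, `d ≥ 1`; `h_j(f_j^d) ≥ 0` for all `j`, `d ≥ 1`; and
`sup_{d ≥ 1} h_j(f_j^d) = ∞` for every `j`.  Then for every nonzero `ℓ¹`
sequence `t`, the function `h_t(γ) = ∑_i t_i·h_i(γ)` differs from every sum of
a homomorphism `Γ → ℝ` and a bounded function by an unbounded amount. -/
theorem ell_one_combination_unbounded
    {Γ : Type*} [Group Γ] (h : ℕ → Γ → ℝ) (f : ℕ → Γ)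
    (hf : ∀ j : ℕ, f j ∈ commutator Γ)
    -- (i) pointwise uniform boundedness
    (hC : ∀ γ : Γ, ∃ C : ℝ, ∀ i : ℕ, |h i γ| ≤ C)
    -- (ii) vanishing for `i > j`
    (hzero : ∀ i j : ℕ, j < i → ∀ d : ℕ, 1 ≤ d → h i (f j ^ d) = 0)
    -- (iii) non-negativity on the diagonal
    (hnonneg : ∀ j : ℕ, ∀ d : ℕ, 1 ≤ d → 0 ≤ h j (f j ^ d))
    -- (iv) unboundedness on the diagonal
    (hunbdd : ∀ j : ℕ, ∀ A : ℝ, ∃ d : ℕ, 1 ≤ d ∧ A ≤ h j (f j ^ d))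
    (t : ℕ → ℝ) (ht : Summable fun i => |t i|) (htne : ∃ i : ℕ, t i ≠ 0) :
    ∀ φ : Γ → ℝ, (∀ a b : Γ, φ (a * b) = φ a + φ b) →
    ∀ b : Γ → ℝ, (∃ Cb : ℝ, ∀ γ : Γ, |b γ| ≤ Cb) →
    ∀ A : ℝ, ∃ γ : Γ, A < |(∑' i, t i * h i γ) - φ γ - b γ| := by
  intro φ hφ b hb A
  obtain ⟨Cb, hCb⟩ := hb
  have hCb0 : 0 ≤ Cb := le_trans (abs_nonneg _) (hCb 1)
  classical
  set j := Nat.find htne with hjdef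
  have htj : t j ≠ 0 := Nat.find_spec htne
  have htj0 : 0 < |t j| := abs_pos.mpr htj
  have htlt : ∀ i, i < j → t i = 0 := by
    intro i hi
    by_contra h'
    exact Nat.find_min htne hi h'
  let φ' : Γ →* Multiplicative ℝ :=
    MonoidHom.mk' (fun g => Multiplicative.ofAdd (φ g)) (by
      intro a c
      simp [hφ])
  have hker : ∀ g ∈ commutator Γ, φ g = 0 := by
    intro g hg
    have := Abelianization.commutator_subset_ker φ' hg
    simpa [φ', MonoidHom.mem_ker] using this
  obtain ⟨d, hd1, hdA⟩ := hunbdd j ((A + Cb + 1) / |t j|)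
  refine ⟨f j ^ d, ?_⟩
  have hmem : f j ^ d ∈ commutator Γ := pow_mem (hf j) d
  have hφ0 : φ (f j ^ d) = 0 := hker _ hmem
  have hsum : (∑' i, t i * h i (f j ^ d)) = t j * h j (f j ^ d) := by
    apply tsum_eq_single
    intro i hij
    rcases lt_or_gt_of_ne hij with h' | h'
    · rw [htlt i h', zero_mul]
    · rw [hzero i j h' d hd1, mul_zero]
  rw [hsum, hφ0]
  set H := h j (f j ^ d) with hH
  have hH0 : 0 ≤ H := hnonneg j d hd1
  have hbig : A + Cb + 1 ≤ |t j| * H := by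
    rw [div_le_iff₀ htj0] at hdA
    linarith [hdA]
  have h1 : |t j| * H - Cb ≤ |t j * H - 0 - b (f j ^ d)| := by
    have := abs_sub_abs_le_abs_sub (t j * H) (b (f j ^ d))
    have habs : |t j * H| = |t j| * H := by
      rw [abs_mul, abs_of_nonneg hH0]
    have hb' := hCb (f j ^ d)
    calc |t j| * H - Cb ≤ |t j * H| - |b (f j ^ d)| := by
          rw [habs]; linarith
      _ ≤ |t j * H - b (f j ^ d)| := abs_sub_abs_le_abs_sub _ _
      _ = |t j * H - 0 - b (f j ^ d)| := by ring_nf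
  linarith
end

section
/- Let Γ be a group, N a normal subgroup of finite index K, Q = Γ/N the finite quotient with projection π : Γ → Q, and s : Q → Γ a section of π with s(1) = 1; for μ ∈ Γ and B ∈ Q set ρ_μ(B) = s(B)·μ·s(B·π(μ))⁻¹ ∈ N. Let D ≥ 0 and let (H_i)_{i∈ℕ} be functions H_i : N → ℝ with defect at most D, such that for every ν ∈ N there is C(ν) with |H_i(ν)| ≤ C(ν) for all i. Let (f_i)_{i∈ℕ} be elements of the commutator subgroup [N,N] such that: (a) for all i > j, all B ∈ Q and all integers d ≥ 1, H_i(s(B)·f_j^d·s(B)⁻¹) = 0; (b) for all i, all B ∈ Q and all d ≥ 1, H_i(s(B)·f_i^d·s(B)⁻¹) ≥ 0; (c) for every i, sup_{d ≥ 1} H_i(f_i^d) = ∞. Then for every real sequence t = (t_i) with Σ_i |t_i| < ∞ that is not identically zero, the function h_t : Γ → ℝ given by h_t(μ) = Σ_i t_i·Σ_{B∈Q} H_i(ρ_μ(B)) is well defined (the series converges absolutely), is a quasimorphism with defect at most K·D·Σ_i|t_i|, and for every group homomorphism φ : Γ → ℝ and every bounded function b : Γ → ℝ the function h_t − φ − b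 is unbounded on Γ. -/
/-- **Algebraic core of the Global WWPD Theorem.**
Let `N ⊴ Γ` have finite index `K`, with finite quotient `Q = Γ ⧸ N`,
projection `π`, section `s` (with `s 1 = 1`), and `ρ_μ(B) = s(B)·μ·s(B·π(μ))⁻¹ ∈ N`.
Let `(H_i)` be quasimorphisms on `N` of defect at most `D`, pointwise uniformly
bounded, and let `(f_i)` be elements of `[N,N]` such that:
(a) `H_i` vanishes on `s(B)·f_j^d·s(B)⁻¹` for `i > j`, `d ≥ 1`;
(b) `H_i` is non-negative on `s(B)·f_i^d·s(B)⁻¹` for `d ≥ 1`;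
(c) `sup_{d ≥ 1} H_i(f_i^d) = ∞`.
Then for every nonzero `ℓ¹` sequence `t`, the function
`h_t(μ) = ∑_i t_i·∑_{B ∈ Q} H_i(ρ_μ(B))` is well defined, a quasimorphism of
defect at most `K·D·∑_i |t_i|`, and differs from every sum of a homomorphism
`Γ → ℝ` and a bounded function by an unbounded amount. -/
theorem global_wwpd_algebraic_core
    {Γ : Type*} [Group Γ] (N : Subgroup Γ) [N.Normal] [Fintype (Γ ⧸ N)]
    (K : ℕ) (hK : Fintype.card (Γ ⧸ N) = K)
    (s : Γ ⧸ N → Γ)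
    (hs : ∀ B : Γ ⧸ N, (QuotientGroup.mk (s B) : Γ ⧸ N) = B)
    (hs1 : s 1 = 1)
    (ρ : Γ → Γ ⧸ N → N)
    (hρ : ∀ (μ : Γ) (B : Γ ⧸ N),
      (ρ μ B : Γ) = s B * μ * (s (B * (QuotientGroup.mk μ : Γ ⧸ N)))⁻¹)
    (D : ℝ) (hD0 : 0 ≤ D)
    (H : ℕ → N → ℝ)
    (hdefect : ∀ (i : ℕ) (a b : N), |H i (a * b) - H i a - H i b| ≤ D)
    (hbdd : ∀ ν : N, ∃ C : ℝ, ∀ i : ℕ, |H i ν| ≤ C)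
    (f : ℕ → N) (hf : ∀ i : ℕ, f i ∈ commutator ↥N)
    -- (a) vanishing on conjugates for `i > j`
    (hzero : ∀ i j : ℕ, j < i → ∀ B : Γ ⧸ N, ∀ d : ℕ, 1 ≤ d → ∀ ν : N,
      (ν : Γ) = s B * (↑(f j ^ d) : Γ) * (s B)⁻¹ → H i ν = 0)
    -- (b) non-negativity on conjugates on the diagonal
    (hnonneg : ∀ i : ℕ, ∀ B : Γ ⧸ N, ∀ d : ℕ, 1 ≤ d → ∀ ν : N,
      (ν : Γ) = s B * (↑(f i ^ d) : Γ) * (s B)⁻¹ → 0 ≤ H i ν)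
    -- (c) unboundedness on the diagonal
    (hunbdd : ∀ i : ℕ, ∀ A : ℝ, ∃ d : ℕ, 1 ≤ d ∧ A ≤ H i (f i ^ d))
    (t : ℕ → ℝ) (ht : Summable fun i => |t i|) (htne : ∃ i : ℕ, t i ≠ 0) :
    -- well-definedness: absolute convergence of the series defining `h_t`
    (∀ μ : Γ, Summable fun i => |t i * ∑ B : Γ ⧸ N, H i (ρ μ B)|) ∧
    -- `h_t` is a quasimorphism with defect at most `K·D·∑_i |t_i|`
    (∀ μ ν : Γ,
      |(∑' i, t i * ∑ B : Γ ⧸ N, H i (ρ (μ * ν) B)) -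
        (∑' i, t i * ∑ B : Γ ⧸ N, H i (ρ μ B)) -
        (∑' i, t i * ∑ B : Γ ⧸ N, H i (ρ ν B))| ≤
        (K : ℝ) * D * ∑' i, |t i|) ∧
    -- `h_t − φ − b` is unbounded for every homomorphism `φ` and bounded `b`
    (∀ φ : Γ → ℝ, (∀ a b : Γ, φ (a * b) = φ a + φ b) →
      ∀ b : Γ → ℝ, (∃ Cb : ℝ, ∀ γ : Γ, |b γ| ≤ Cb) →
      ∀ A : ℝ, ∃ μ : Γ,
        A < |(∑' i, t i * ∑ B : Γ ⧸ N, H i (ρ μ B)) - φ μ - b μ|) := by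
  classical
  have hmk : ∀ a b : Γ, (QuotientGroup.mk (a * b) : Γ ⧸ N) =
      (QuotientGroup.mk a) * QuotientGroup.mk b := fun a b => rfl
  -- cocycle identity
  have hcoc : ∀ (μ ν : Γ) (B : Γ ⧸ N),
      ρ (μ * ν) B = ρ μ B * ρ ν (B * (QuotientGroup.mk μ : Γ ⧸ N)) := by
    intro μ ν B
    apply Subtype.ext
    rw [Subgroup.coe_mul, hρ, hρ, hρ, hmk, ← mul_assoc B]
    group
  -- Part 1 : summability
  have hS : ∀ μ : Γ, Summable fun i => |t i * ∑ B : Γ ⧸ N, H i (ρ μ B)| := by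
    intro μ
    set C : Γ ⧸ N → ℝ := fun B => Classical.choose (hbdd (ρ μ B)) with hCdef
    have hC : ∀ (i : ℕ) (B : Γ ⧸ N), |H i (ρ μ B)| ≤ C B := fun i B =>
      Classical.choose_spec (hbdd (ρ μ B)) i
    set Cμ : ℝ := ∑ B : Γ ⧸ N, C B with hCμ
    have hSb : ∀ i : ℕ, |∑ B : Γ ⧸ N, H i (ρ μ B)| ≤ Cμ := fun i =>
      (Finset.abs_sum_le_sum_abs _ _).trans (Finset.sum_le_sum fun B _ => hC i B)
    refine Summable.of_nonneg_of_le (fun i => abs_nonneg _) (fun i => ?_) (ht.mul_right Cμ)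
    rw [abs_mul]
    exact mul_le_mul_of_nonneg_left (hSb i) (abs_nonneg _)
  refine ⟨hS, ?_, ?_⟩
  · -- Part 2 : defect bound
    intro μ ν
    have h1 := (hS (μ * ν)).of_abs
    have h2 := (hS μ).of_abs
    have h3 := (hS ν).of_abs
    have key : ∀ i : ℕ,
        |t i * ∑ B : Γ ⧸ N, H i (ρ (μ * ν) B) - t i * ∑ B : Γ ⧸ N, H i (ρ μ B)
          - t i * ∑ B : Γ ⧸ N, H i (ρ ν B)| ≤ |t i| * ((K : ℝ) * D) := by
      intro i
      have hre : (∑ B : Γ ⧸ N, H i (ρ ν B)) =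
          ∑ B : Γ ⧸ N, H i (ρ ν (B * (QuotientGroup.mk μ : Γ ⧸ N))) :=
        (Equiv.sum_comp (Equiv.mulRight (QuotientGroup.mk μ : Γ ⧸ N))
          (fun B => H i (ρ ν B))).symm
      have hinner : |(∑ B : Γ ⧸ N, H i (ρ (μ * ν) B)) - (∑ B : Γ ⧸ N, H i (ρ μ B))
          - (∑ B : Γ ⧸ N, H i (ρ ν B))| ≤ (K : ℝ) * D := by
        rw [hre, ← Finset.sum_sub_distrib, ← Finset.sum_sub_distrib]
        refine (Finset.abs_sum_le_sum_abs _ _).trans ?_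
        have : ∀ B : Γ ⧸ N, |H i (ρ (μ * ν) B) - H i (ρ μ B)
            - H i (ρ ν (B * (QuotientGroup.mk μ : Γ ⧸ N)))| ≤ D := by
          intro B
          rw [hcoc μ ν B]
          exact hdefect i _ _
        calc ∑ B : Γ ⧸ N, |H i (ρ (μ * ν) B) - H i (ρ μ B)
              - H i (ρ ν (B * (QuotientGroup.mk μ : Γ ⧸ N)))|
            ≤ ∑ _B : Γ ⧸ N, D := Finset.sum_le_sum fun B _ => this B
          _ = (K : ℝ) * D := by
              rw [Finset.sum_const, Finset.card_univ, hK, nsmul_eq_mul]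
      calc |t i * ∑ B : Γ ⧸ N, H i (ρ (μ * ν) B) - t i * ∑ B : Γ ⧸ N, H i (ρ μ B)
            - t i * ∑ B : Γ ⧸ N, H i (ρ ν B)|
          = |t i| * |(∑ B : Γ ⧸ N, H i (ρ (μ * ν) B)) - (∑ B : Γ ⧸ N, H i (ρ μ B))
            - (∑ B : Γ ⧸ N, H i (ρ ν B))| := by rw [← abs_mul]; ring_nf
        _ ≤ |t i| * ((K : ℝ) * D) := mul_le_mul_of_nonneg_left hinner (abs_nonneg _)
    rw [← Summable.tsum_sub h1 h2, ← Summable.tsum_sub (h1.sub h2) h3]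
    have hsumm : Summable fun i => |t i * ∑ B : Γ ⧸ N, H i (ρ (μ * ν) B)
        - t i * ∑ B : Γ ⧸ N, H i (ρ μ B) - t i * ∑ B : Γ ⧸ N, H i (ρ ν B)| :=
      Summable.of_nonneg_of_le (fun i => abs_nonneg _) key (ht.mul_right _)
    calc |∑' i, (t i * ∑ B : Γ ⧸ N, H i (ρ (μ * ν) B)
            - t i * ∑ B : Γ ⧸ N, H i (ρ μ B) - t i * ∑ B : Γ ⧸ N, H i (ρ ν B))|
        ≤ ∑' i, |t i * ∑ B : Γ ⧸ N, H i (ρ (μ * ν) B)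
            - t i * ∑ B : Γ ⧸ N, H i (ρ μ B) - t i * ∑ B : Γ ⧸ N, H i (ρ ν B)| := by
          simpa using norm_tsum_le_tsum_norm (f := fun i => t i * ∑ B : Γ ⧸ N, H i (ρ (μ * ν) B)
            - t i * ∑ B : Γ ⧸ N, H i (ρ μ B) - t i * ∑ B : Γ ⧸ N, H i (ρ ν B)) hsumm
      _ ≤ ∑' i, |t i| * ((K : ℝ) * D) := Summable.tsum_le_tsum key hsumm (ht.mul_right _)
      _ = (∑' i, |t i|) * ((K : ℝ) * D) := tsum_mul_right
      _ = (K : ℝ) * D * ∑' i, |t i| := by ring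
  · -- Part 3 : unboundedness
    intro φ hφ b hb A
    obtain ⟨Cb, hCb⟩ := hb
    have hCb0 : (0 : ℝ) ≤ Cb := le_trans (abs_nonneg _) (hCb 1)
    set i₀ := Nat.find htne with hi₀
    have ht0 : t i₀ ≠ 0 := Nat.find_spec htne
    have htabs : 0 < |t i₀| := abs_pos.mpr ht0
    obtain ⟨d, hd1, hdA⟩ := hunbdd i₀ ((A + Cb + 1) / |t i₀|)
    refine ⟨(↑(f i₀ ^ d) : Γ), ?_⟩
    set μ : Γ := (↑(f i₀ ^ d) : Γ) with hμdef
    have hπμ : (QuotientGroup.mk μ : Γ ⧸ N) = 1 :=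
      (QuotientGroup.eq_one_iff _).2 (f i₀ ^ d).2
    have hρμ : ∀ B : Γ ⧸ N, (ρ μ B : Γ) = s B * μ * (s B)⁻¹ := fun B => by
      rw [hρ, hπμ, mul_one]
    -- φ vanishes on μ
    have hφ1 : φ 1 = 0 := by have := hφ 1 1; simp at this; linarith
    let φ' : Γ →* Multiplicative ℝ :=
      { toFun := fun g => Multiplicative.ofAdd (φ g)
        map_one' := by simp [hφ1]
        map_mul' := fun a c => by simp [hφ a c] }
    have hμcomm : μ ∈ commutator Γ := by
      have h1 : f i₀ ^ d ∈ commutator ↥N := (commutator ↥N).pow_mem (hf i₀) d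
      have h2 : μ ∈ (commutator ↥N).map N.subtype := ⟨f i₀ ^ d, h1, rfl⟩
      have h3 : (commutator ↥N).map N.subtype ≤ commutator Γ := by
        rw [commutator_def, Subgroup.map_commutator]
        exact Subgroup.commutator_mono le_top le_top
      exact h3 h2
    have hφμ : φ μ = 0 := Abelianization.commutator_subset_ker φ' hμcomm
    -- evaluate the series at μ
    have hterm : ∀ i : ℕ, i ≠ i₀ → t i * ∑ B : Γ ⧸ N, H i (ρ μ B) = 0 := by
      intro i hi
      rcases lt_or_gt_of_ne hi with hlt | hgt
      · have : t i = 0 := by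
          by_contra hne
          exact absurd (Nat.find_le hne) (not_le.mpr hlt)
        rw [this, zero_mul]
      · have : ∀ B : Γ ⧸ N, H i (ρ μ B) = 0 := fun B =>
          hzero i i₀ hgt B d hd1 (ρ μ B) (hρμ B)
        rw [Finset.sum_congr rfl fun B _ => this B, Finset.sum_const, smul_zero, mul_zero]
    have htsum : (∑' i, t i * ∑ B : Γ ⧸ N, H i (ρ μ B)) =
        t i₀ * ∑ B : Γ ⧸ N, H i₀ (ρ μ B) := tsum_eq_single i₀ hterm
    have hnn : ∀ B : Γ ⧸ N, 0 ≤ H i₀ (ρ μ B) := fun B =>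
      hnonneg i₀ B d hd1 (ρ μ B) (hρμ B)
    have hρμ1 : ρ μ 1 = f i₀ ^ d := by
      apply Subtype.ext
      rw [hρμ 1, hs1]; simp [hμdef]
    have hSlow : H i₀ (f i₀ ^ d) ≤ ∑ B : Γ ⧸ N, H i₀ (ρ μ B) := by
      have := Finset.single_le_sum (f := fun B : Γ ⧸ N => H i₀ (ρ μ B))
        (fun B _ => hnn B) (Finset.mem_univ (1 : Γ ⧸ N))
      simpa [hρμ1] using this
    have hSnn : 0 ≤ ∑ B : Γ ⧸ N, H i₀ (ρ μ B) := Finset.sum_nonneg fun B _ => hnn B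
    have hbig : A + Cb + 1 ≤ |t i₀ * ∑ B : Γ ⧸ N, H i₀ (ρ μ B)| := by
      rw [abs_mul, abs_of_nonneg hSnn]
      have : (A + Cb + 1) / |t i₀| ≤ ∑ B : Γ ⧸ N, H i₀ (ρ μ B) := le_trans hdA hSlow
      calc A + Cb + 1 = (A + Cb + 1) / |t i₀| * |t i₀| := by field_simp
        _ ≤ (∑ B : Γ ⧸ N, H i₀ (ρ μ B)) * |t i₀| :=
            mul_le_mul_of_nonneg_right this (abs_nonneg _)
        _ = |t i₀| * ∑ B : Γ ⧸ N, H i₀ (ρ μ B) := mul_comm _ _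
    rw [htsum, hφμ, sub_zero]
    have habs := abs_sub_abs_le_abs_sub (t i₀ * ∑ B : Γ ⧸ N, H i₀ (ρ μ B)) (b μ)
    have := hCb μ
    linarith
end

section
/- (Synchronization Property.) Let X be a geodesic metric space, k ≥ 1, c ≥ 0, and L ≥ 0 a thinness constant for (k,c)-quasigeodesic quadrilaterals in X, i.e.: for any four points w,x,y,z ∈ X and any continuous (k,c)-quasigeodesics joining w to x, x to y, y to z, and z to w, the first is contained in the L-neighborhood of the union of the other three. Let h be an isometry of X and ℓ : ℝ → X a continuous (k,c)-quasigeodesic with ℓ(s+1) = h(ℓ(s)) for all s ∈ ℝ and such that the image ℓ([0,1]) has diameter at most d(O, h(O)), where O = ℓ(0). Set L₁ = L + d(O, h(O)) and L₂ = 2L₁ + k(k(2L + 7L₁) + kc) + c. Then for every isometry g of X and all integers M, N ≥ 0: if d(O, g(O)) ≤ L₁ and d(h^M(O), g(h^N(O))) ≤ L₁, then for every integer 0 ≤ m ≤ max(M,N) one has d(h^m(O), g(h^m(O))) ≤ L₂. -/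
/-- `γ` is a continuous `(k,c)`-quasigeodesic on the interval `[a,b]`. -/
def IsQuasigeodesicOn {X : Type*} [MetricSpace X]
    (k c : ℝ) (γ : ℝ → X) (a b : ℝ) : Prop :=
  ContinuousOn γ (Set.Icc a b) ∧
    ∀ s ∈ Set.Icc a b, ∀ t ∈ Set.Icc a b,
      |s - t| / k - c ≤ dist (γ s) (γ t) ∧ dist (γ s) (γ t) ≤ k * |s - t| + c

/-- Key lemma: the synchronization property for `m ≤ M`. -/
lemma sync_key
    {X : Type*} [MetricSpace X]
    (k c L : ℝ) (hk : 1 ≤ k) (hc : 0 ≤ c) (hL : 0 ≤ L)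
    (hgeo : ∀ p q : X, ∃ γ : ℝ → X, γ 0 = p ∧ γ (dist p q) = q ∧
        ∀ s ∈ Set.Icc 0 (dist p q), ∀ t ∈ Set.Icc 0 (dist p q),
          dist (γ s) (γ t) = |s - t|)
    (hthin : ∀ (w x y z : X) (γ₁ γ₂ γ₃ γ₄ : ℝ → X)
        (a₁ b₁ a₂ b₂ a₃ b₃ a₄ b₄ : ℝ),
      IsQuasigeodesicOn k c γ₁ a₁ b₁ → IsQuasigeodesicOn k c γ₂ a₂ b₂ →
      IsQuasigeodesicOn k c γ₃ a₃ b₃ → IsQuasigeodesicOn k c γ₄ a₄ b₄ →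
      γ₁ a₁ = w → γ₁ b₁ = x → γ₂ a₂ = x → γ₂ b₂ = y →
      γ₃ a₃ = y → γ₃ b₃ = z → γ₄ a₄ = z → γ₄ b₄ = w →
      ∀ s ∈ Set.Icc a₁ b₁,
        ∃ p ∈ γ₂ '' Set.Icc a₂ b₂ ∪ γ₃ '' Set.Icc a₃ b₃ ∪ γ₄ '' Set.Icc a₄ b₄,
          dist (γ₁ s) p ≤ L)
    (h : X → X) (hh : Isometry h)
    (ℓ : ℝ → X) (hℓcont : Continuous ℓ)
    (hℓqg : ∀ s t : ℝ,
      |s - t| / k - c ≤ dist (ℓ s) (ℓ t) ∧ dist (ℓ s) (ℓ t) ≤ k * |s - t| + c)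
    (hℓequiv : ∀ s : ℝ, ℓ (s + 1) = h (ℓ s))
    (O : X) (hO : O = ℓ 0)
    (hfund : ∀ s ∈ Set.Icc (0 : ℝ) 1, ∀ t ∈ Set.Icc (0 : ℝ) 1,
      dist (ℓ s) (ℓ t) ≤ dist O (h O))
    (L₁ L₂ : ℝ)
    (hL₁ : L₁ = L + dist O (h O))
    (hL₂ : L₂ = 2 * L₁ + k * (k * (2 * L + 7 * L₁) + k * c) + c)
    (g : X → X) (hg : Isometry g)
    (M N : ℕ)
    (hgO : dist O (g O) ≤ L₁)
    (hgMN : dist (h^[M] O) (g (h^[N] O)) ≤ L₁) :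
    ∀ m : ℕ, m ≤ M → dist (h^[m] O) (g (h^[m] O)) ≤ L₂ := by
  have hk0 : (0:ℝ) < k := lt_of_lt_of_le one_pos hk
  have hΔ : 0 ≤ dist O (h O) := dist_nonneg
  have hL₁0 : 0 ≤ L₁ := by rw [hL₁]; linarith
  have hLL₁ : L ≤ L₁ := by rw [hL₁]; linarith
  -- iterates of h along ℓ
  have hiter : ∀ (n : ℕ) (s : ℝ), ℓ (s + n) = h^[n] (ℓ s) := by
    intro n
    induction n with
    | zero => intro s; simp
    | succ n ih =>
      intro s
      have e : (s + ((n:ℕ)+1 : ℕ) : ℝ) = (s + n) + 1 := by push_cast; ring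
      rw [e, hℓequiv, ih, ← Function.iterate_succ_apply' h n (ℓ s)]
  have hx : ∀ n : ℕ, h^[n] O = ℓ (n : ℝ) := by
    intro n; rw [hO, ← hiter n 0, zero_add]
  have hhn : ∀ n : ℕ, Isometry (h^[n]) := by
    intro n
    induction n with
    | zero => simpa using isometry_id
    | succ n ih => rw [Function.iterate_succ]; exact ih.comp hh
  have hshift : ∀ (n : ℕ) (s t : ℝ),
      dist (ℓ (s + n)) (ℓ (t + n)) = dist (ℓ s) (ℓ t) := by
    intro n s t; rw [hiter n s, hiter n t]; exact (hhn n).dist_eq _ _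
  -- constructors for quasigeodesics
  have mk_qg : ∀ (γ : ℝ → X) (a b : ℝ), ContinuousOn γ (Set.Icc a b) →
      (∀ s ∈ Set.Icc a b, ∀ t ∈ Set.Icc a b,
        |s - t| / k - c ≤ dist (γ s) (γ t) ∧ dist (γ s) (γ t) ≤ k * |s - t| + c) →
      IsQuasigeodesicOn k c γ a b := fun γ a b h1 h2 => ⟨h1, h2⟩
  have qg_iso : ∀ (γ : ℝ → X) (a b : ℝ),
      (∀ s ∈ Set.Icc a b, ∀ t ∈ Set.Icc a b, dist (γ s) (γ t) = |s - t|) →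
      IsQuasigeodesicOn k c γ a b := by
    intro γ a b hiso
    refine mk_qg γ a b ?_ ?_
    · refine Metric.continuousOn_iff.mpr ?_
      intro x hx' ε hε
      refine ⟨ε, hε, fun y hy hxy => ?_⟩
      rw [hiso y hy x hx']
      rw [Real.dist_eq] at hxy
      exact hxy
    · intro s hs t ht
      rw [hiso s hs t ht]
      have h1 : 0 ≤ |s - t| := abs_nonneg _
      constructor
      · have := div_le_self h1 hk; linarith
      · nlinarith
  have qg_ℓ : ∀ a b : ℝ, IsQuasigeodesicOn k c ℓ a b :=
    fun a b => mk_qg ℓ a b hℓcont.continuousOn (fun s _ t _ => hℓqg s t)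
  have qg_const : ∀ p : X, IsQuasigeodesicOn k c (fun _ => p) 0 0 := by
    intro p
    refine mk_qg _ 0 0 continuousOn_const ?_
    intro s hs t ht
    have hs' : s = 0 := le_antisymm hs.2 hs.1
    have ht' : t = 0 := le_antisymm ht.2 ht.1
    subst hs'; subst ht'
    simp only [sub_self, abs_zero, zero_div, zero_sub, dist_self, mul_zero, zero_add]
    exact ⟨neg_nonpos.mpr hc, hc⟩
  -- alignment: quasi-additivity along ℓ (via thinness of a degenerate quadrilateral)
  have align : ∀ T u : ℝ, 0 ≤ u → u ≤ T →
      dist (ℓ 0) (ℓ u) + dist (ℓ u) (ℓ T) ≤ dist (ℓ 0) (ℓ T) + 2 * L := by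
    intro T u h0u huT
    obtain ⟨σ, hσ0, hσ1, hσiso⟩ := hgeo (ℓ 0) (ℓ T)
    set D := dist (ℓ 0) (ℓ T) with hD
    have hD0 : 0 ≤ D := dist_nonneg
    have hrev : ∀ s ∈ Set.Icc (0:ℝ) D, ∀ t ∈ Set.Icc (0:ℝ) D,
        dist (σ (D - s)) (σ (D - t)) = |s - t| := by
      intro s hs t ht
      have h1 : D - s ∈ Set.Icc (0:ℝ) D := ⟨by linarith [hs.2], by linarith [hs.1]⟩
      have h2 : D - t ∈ Set.Icc (0:ℝ) D := ⟨by linarith [ht.2], by linarith [ht.1]⟩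
      rw [hσiso _ h1 _ h2, show D - s - (D - t) = -(s - t) by ring, abs_neg]
    obtain ⟨p, hp, hdp⟩ := hthin (ℓ 0) (ℓ T) (ℓ 0) (ℓ 0) ℓ (fun v => σ (D - v))
        (fun _ => ℓ 0) (fun _ => ℓ 0) 0 T 0 D 0 0 0 0
        (qg_ℓ 0 T) (qg_iso _ 0 D hrev) (qg_const _) (qg_const _)
        rfl rfl (by show σ (D - 0) = ℓ T; rw [sub_zero]; exact hσ1)
        (by show σ (D - D) = ℓ 0; rw [sub_self]; exact hσ0)
        rfl rfl rfl rfl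
        u ⟨h0u, huT⟩
    have hp' : ∃ r ∈ Set.Icc (0:ℝ) D, p = σ r := by
      rcases hp with (⟨r, hr, hpr⟩ | ⟨r, _, hpr⟩) | ⟨r, _, hpr⟩
      · exact ⟨D - r, ⟨by linarith [hr.2], by linarith [hr.1]⟩, hpr.symm⟩
      · exact ⟨0, ⟨le_rfl, hD0⟩, by rw [← hpr, hσ0]⟩
      · exact ⟨0, ⟨le_rfl, hD0⟩, by rw [← hpr, hσ0]⟩
    obtain ⟨r, hr, rfl⟩ := hp'
    have e1 : dist (ℓ 0) (σ r) = r := by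
      have e := hσiso 0 ⟨le_rfl, hD0⟩ r hr
      rw [hσ0] at e
      rw [e, abs_of_nonpos (by linarith [hr.1] : (0:ℝ) - r ≤ 0)]; ring
    have e2 : dist (σ r) (ℓ T) = D - r := by
      have e := hσiso r hr D ⟨hD0, le_rfl⟩
      rw [hσ1] at e
      rw [e, abs_of_nonpos (by linarith [hr.2] : r - D ≤ 0)]; ring
    have t1 : dist (ℓ 0) (ℓ u) ≤ r + L := by
      calc dist (ℓ 0) (ℓ u) ≤ dist (ℓ 0) (σ r) + dist (σ r) (ℓ u) := dist_triangle _ _ _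
        _ = r + dist (ℓ u) (σ r) := by rw [e1, dist_comm]
        _ ≤ r + L := by linarith [hdp]
    have t2 : dist (ℓ u) (ℓ T) ≤ L + (D - r) := by
      calc dist (ℓ u) (ℓ T) ≤ dist (ℓ u) (σ r) + dist (σ r) (ℓ T) := dist_triangle _ _ _
        _ ≤ L + (D - r) := by rw [e2]; linarith [hdp]
    linarith
  -- now the main argument
  intro m hm
  rw [hx m]
  have hgO' : dist (ℓ 0) (g (ℓ 0)) ≤ L₁ := by rw [← hO]; exact hgO
  have hgMN' : dist (ℓ (M:ℝ)) (g (ℓ (N:ℝ))) ≤ L₁ := by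
    rw [← hx M, ← hx N]; exact hgMN
  -- the master step: closeness to g (ℓ n) for any integer n suffices
  have main : ∀ n : ℕ, dist (ℓ (m:ℝ)) (g (ℓ (n:ℝ))) ≤ L + 2 * L₁ →
      dist (ℓ (m:ℝ)) (g (ℓ (m:ℝ))) ≤ L₂ := by
    intro n hn
    have h2 : dist (ℓ 0) (ℓ (n:ℝ)) ≤ dist (ℓ 0) (ℓ (m:ℝ)) + (L + 3*L₁) := by
      have hcomm : dist (g (ℓ 0)) (ℓ 0) = dist (ℓ 0) (g (ℓ 0)) := dist_comm _ _
      calc dist (ℓ 0) (ℓ (n:ℝ)) = dist (g (ℓ 0)) (g (ℓ (n:ℝ))) := (hg.dist_eq _ _).symm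
        _ ≤ dist (g (ℓ 0)) (ℓ 0) + dist (ℓ 0) (ℓ (m:ℝ)) + dist (ℓ (m:ℝ)) (g (ℓ (n:ℝ))) :=
            dist_triangle4 _ _ _ _
        _ ≤ dist (ℓ 0) (ℓ (m:ℝ)) + (L + 3*L₁) := by linarith
    have h3 : dist (ℓ 0) (ℓ (m:ℝ)) ≤ dist (ℓ 0) (ℓ (n:ℝ)) + (L + 3*L₁) := by
      have hcomm : dist (g (ℓ (n:ℝ))) (ℓ (m:ℝ)) = dist (ℓ (m:ℝ)) (g (ℓ (n:ℝ))) := dist_comm _ _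
      calc dist (ℓ 0) (ℓ (m:ℝ))
          ≤ dist (ℓ 0) (g (ℓ 0)) + dist (g (ℓ 0)) (g (ℓ (n:ℝ))) + dist (g (ℓ (n:ℝ))) (ℓ (m:ℝ)) :=
            dist_triangle4 _ _ _ _
        _ = dist (ℓ 0) (g (ℓ 0)) + dist (ℓ 0) (ℓ (n:ℝ)) + dist (g (ℓ (n:ℝ))) (ℓ (m:ℝ)) := by
            rw [hg.dist_eq]
        _ ≤ dist (ℓ 0) (ℓ (n:ℝ)) + (L + 3*L₁) := by linarith
    have h4 : dist (ℓ (m:ℝ)) (ℓ (n:ℝ)) ≤ 3*L + 3*L₁ := by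
      rcases le_total (m:ℝ) (n:ℝ) with hmn | hnm
      · have := align (n:ℝ) (m:ℝ) (Nat.cast_nonneg m) hmn
        linarith
      · have := align (m:ℝ) (n:ℝ) (Nat.cast_nonneg n) hnm
        have hcomm : dist (ℓ (m:ℝ)) (ℓ (n:ℝ)) = dist (ℓ (n:ℝ)) (ℓ (m:ℝ)) := dist_comm _ _
        linarith
    have h5 : dist (ℓ (m:ℝ)) (g (ℓ (m:ℝ))) ≤ 4*L + 5*L₁ := by
      have hcomm : dist (ℓ (n:ℝ)) (ℓ (m:ℝ)) = dist (ℓ (m:ℝ)) (ℓ (n:ℝ)) := dist_comm _ _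
      calc dist (ℓ (m:ℝ)) (g (ℓ (m:ℝ)))
          ≤ dist (ℓ (m:ℝ)) (g (ℓ (n:ℝ))) + dist (g (ℓ (n:ℝ))) (g (ℓ (m:ℝ))) := dist_triangle _ _ _
        _ = dist (ℓ (m:ℝ)) (g (ℓ (n:ℝ))) + dist (ℓ (n:ℝ)) (ℓ (m:ℝ)) := by rw [hg.dist_eq]
        _ ≤ (L + 2*L₁) + (3*L + 3*L₁) := by linarith
        _ = 4*L + 5*L₁ := by ring
    have h7 : (0:ℝ) ≤ 2*L + 7*L₁ := by linarith
    have h8 : 2*L + 7*L₁ ≤ k * (k * (2*L + 7*L₁)) := by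
      have hA : (1:ℝ) * (2*L+7*L₁) ≤ k * (2*L+7*L₁) := mul_le_mul_of_nonneg_right hk h7
      have hA0 : (0:ℝ) ≤ k * (2*L+7*L₁) := mul_nonneg hk0.le h7
      have hB : (1:ℝ) * (k*(2*L+7*L₁)) ≤ k * (k*(2*L+7*L₁)) := mul_le_mul_of_nonneg_right hk hA0
      linarith
    have h9 : 0 ≤ k * (k * c) := mul_nonneg hk0.le (mul_nonneg hk0.le hc)
    have hexp : k * (k * (2*L + 7*L₁) + k * c) = k*(k*(2*L + 7*L₁)) + k*(k*c) := by ring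
    rw [hL₂]
    linarith
  -- build the quadrilateral
  obtain ⟨σ₂, hσ₂0, hσ₂1, hσ₂iso⟩ := hgeo (ℓ (M:ℝ)) (g (ℓ (N:ℝ)))
  obtain ⟨σ₄, hσ₄0, hσ₄1, hσ₄iso⟩ := hgeo (g (ℓ 0)) (ℓ 0)
  set D₂ := dist (ℓ (M:ℝ)) (g (ℓ (N:ℝ))) with hD₂def
  set D₄ := dist (g (ℓ 0)) (ℓ 0) with hD₄def
  have hD₂0 : 0 ≤ D₂ := dist_nonneg
  have hD₄0 : 0 ≤ D₄ := dist_nonneg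
  have hD₂L : D₂ ≤ L₁ := hgMN'
  have hD₄L : D₄ ≤ L₁ := by rw [hD₄def, dist_comm]; exact hgO'
  have hγ₃qg : IsQuasigeodesicOn k c (fun v => g (ℓ ((N:ℝ) - v))) 0 (N:ℝ) := by
    refine mk_qg _ _ _ ?_ ?_
    · exact (hg.continuous.comp (hℓcont.comp (continuous_const.sub continuous_id))).continuousOn
    · intro s _ t _
      have e : dist (g (ℓ ((N:ℝ) - s))) (g (ℓ ((N:ℝ) - t)))
          = dist (ℓ ((N:ℝ) - s)) (ℓ ((N:ℝ) - t)) := hg.dist_eq _ _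
      have hq := hℓqg ((N:ℝ) - s) ((N:ℝ) - t)
      rw [show (N:ℝ) - s - ((N:ℝ) - t) = -(s - t) by ring, abs_neg] at hq
      exact ⟨le_of_le_of_eq hq.1 e.symm, le_of_eq_of_le e hq.2⟩
  obtain ⟨p, hp, hdp⟩ := hthin (ℓ 0) (ℓ (M:ℝ)) (g (ℓ (N:ℝ))) (g (ℓ 0))
      ℓ σ₂ (fun v => g (ℓ ((N:ℝ) - v))) σ₄
      0 (M:ℝ) 0 D₂ 0 (N:ℝ) 0 D₄
      (qg_ℓ 0 (M:ℝ)) (qg_iso σ₂ 0 D₂ hσ₂iso) hγ₃qg (qg_iso σ₄ 0 D₄ hσ₄iso)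
      rfl rfl hσ₂0 hσ₂1
      (by show g (ℓ ((N:ℝ) - 0)) = g (ℓ (N:ℝ)); rw [sub_zero])
      (by show g (ℓ ((N:ℝ) - (N:ℝ))) = g (ℓ 0); rw [sub_self])
      hσ₄0 hσ₄1
      (m:ℝ) ⟨Nat.cast_nonneg m, by exact_mod_cast hm⟩
  rcases hp with (⟨r, hr, rfl⟩ | ⟨r, hr, rfl⟩) | ⟨r, hr, rfl⟩
  · -- near the geodesic from ℓ M to g (ℓ N): use n := N
    refine main N ?_
    have e1 : dist (σ₂ r) (g (ℓ (N:ℝ))) = D₂ - r := by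
      have e := hσ₂iso r hr D₂ ⟨hD₂0, le_rfl⟩
      rw [hσ₂1] at e
      rw [e, abs_of_nonpos (by linarith [hr.2] : r - D₂ ≤ 0)]; ring
    calc dist (ℓ (m:ℝ)) (g (ℓ (N:ℝ)))
        ≤ dist (ℓ (m:ℝ)) (σ₂ r) + dist (σ₂ r) (g (ℓ (N:ℝ))) := dist_triangle _ _ _
      _ ≤ L + (D₂ - r) := by rw [e1]; linarith [hdp]
      _ ≤ L + 2*L₁ := by linarith [hr.1]
  · -- near g ∘ ℓ: synchronize with the nearest integer parameter
    change dist (ℓ (m:ℝ)) (g (ℓ ((N:ℝ) - r))) ≤ L at hdp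
    set t := (N:ℝ) - r with htdef
    have ht0 : 0 ≤ t := by rw [htdef]; linarith [hr.2]
    set n : ℕ := ⌊t⌋₊ with hndef
    have hn1 : (n:ℝ) ≤ t := Nat.floor_le ht0
    have hn2 : t < (n:ℝ) + 1 := Nat.lt_floor_add_one t
    have htn : dist (ℓ t) (ℓ (n:ℝ)) ≤ dist O (h O) := by
      have e : dist (ℓ (t - n + n)) (ℓ (0 + n)) = dist (ℓ (t - n)) (ℓ 0) := hshift n (t - n) 0
      rw [show t - (n:ℝ) + (n:ℝ) = t by ring, zero_add] at e
      rw [e]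
      exact hfund (t - n) ⟨by linarith, by linarith⟩ 0 ⟨le_rfl, zero_le_one⟩
    refine main n ?_
    calc dist (ℓ (m:ℝ)) (g (ℓ (n:ℝ)))
        ≤ dist (ℓ (m:ℝ)) (g (ℓ t)) + dist (g (ℓ t)) (g (ℓ (n:ℝ))) := dist_triangle _ _ _
      _ = dist (ℓ (m:ℝ)) (g (ℓ t)) + dist (ℓ t) (ℓ (n:ℝ)) := by rw [hg.dist_eq]
      _ ≤ L + dist O (h O) := add_le_add hdp htn
      _ ≤ L + 2*L₁ := by rw [hL₁] at hLL₁ ⊢; linarith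
  · -- near the geodesic from g (ℓ 0) to ℓ 0: use n := 0
    refine main 0 ?_
    have e1 : dist (σ₄ r) (g (ℓ 0)) = r := by
      have e := hσ₄iso 0 ⟨le_rfl, hD₄0⟩ r hr
      rw [hσ₄0] at e
      rw [dist_comm, e, abs_of_nonpos (by linarith [hr.1] : (0:ℝ) - r ≤ 0)]; ring
    have e0 : ((0:ℕ):ℝ) = (0:ℝ) := Nat.cast_zero
    rw [e0]
    calc dist (ℓ (m:ℝ)) (g (ℓ 0))
        ≤ dist (ℓ (m:ℝ)) (σ₄ r) + dist (σ₄ r) (g (ℓ 0)) := dist_triangle _ _ _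
      _ ≤ L + r := by rw [e1]; linarith [hdp]
      _ ≤ L + 2*L₁ := by linarith [hr.2, hD₄L]

/-- **The Synchronization Property.** -/
theorem synchronization_property
    {X : Type*} [MetricSpace X]
    (k c L : ℝ) (hk : 1 ≤ k) (hc : 0 ≤ c) (hL : 0 ≤ L)
    -- `X` is a geodesic metric space
    (hgeo : ∀ p q : X, ∃ γ : ℝ → X, γ 0 = p ∧ γ (dist p q) = q ∧
        ∀ s ∈ Set.Icc 0 (dist p q), ∀ t ∈ Set.Icc 0 (dist p q),
          dist (γ s) (γ t) = |s - t|)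
    -- `L` is a thinness constant for `(k,c)`-quasigeodesic quadrilaterals:
    -- each side lies in the `L`-neighborhood of the union of the other three
    (hthin : ∀ (w x y z : X) (γ₁ γ₂ γ₃ γ₄ : ℝ → X)
        (a₁ b₁ a₂ b₂ a₃ b₃ a₄ b₄ : ℝ),
      IsQuasigeodesicOn k c γ₁ a₁ b₁ → IsQuasigeodesicOn k c γ₂ a₂ b₂ →
      IsQuasigeodesicOn k c γ₃ a₃ b₃ → IsQuasigeodesicOn k c γ₄ a₄ b₄ →
      γ₁ a₁ = w → γ₁ b₁ = x → γ₂ a₂ = x → γ₂ b₂ = y →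
      γ₃ a₃ = y → γ₃ b₃ = z → γ₄ a₄ = z → γ₄ b₄ = w →
      ∀ s ∈ Set.Icc a₁ b₁,
        ∃ p ∈ γ₂ '' Set.Icc a₂ b₂ ∪ γ₃ '' Set.Icc a₃ b₃ ∪ γ₄ '' Set.Icc a₄ b₄,
          dist (γ₁ s) p ≤ L)
    -- `h` is an isometry of `X`
    (h : X → X) (hh : Isometry h) (hhbij : Function.Bijective h)
    -- `ℓ` is a continuous `(k,c)`-quasigeodesic with `ℓ(s+1) = h(ℓ(s))`
    (ℓ : ℝ → X) (hℓcont : Continuous ℓ)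
    (hℓqg : ∀ s t : ℝ,
      |s - t| / k - c ≤ dist (ℓ s) (ℓ t) ∧ dist (ℓ s) (ℓ t) ≤ k * |s - t| + c)
    (hℓequiv : ∀ s : ℝ, ℓ (s + 1) = h (ℓ s))
    (O : X) (hO : O = ℓ 0)
    -- the fundamental domain `ℓ([0,1])` has diameter at most `d(O, h(O))`
    (hfund : ∀ s ∈ Set.Icc (0 : ℝ) 1, ∀ t ∈ Set.Icc (0 : ℝ) 1,
      dist (ℓ s) (ℓ t) ≤ dist O (h O))
    (L₁ L₂ : ℝ)
    (hL₁ : L₁ = L + dist O (h O))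
    (hL₂ : L₂ = 2 * L₁ + k * (k * (2 * L + 7 * L₁) + k * c) + c)
    -- `g` is an isometry of `X`
    (g : X → X) (hg : Isometry g) (hgbij : Function.Bijective g)
    (M N : ℕ)
    (hgO : dist O (g O) ≤ L₁)
    (hgMN : dist (h^[M] O) (g (h^[N] O)) ≤ L₁) :
    ∀ m : ℕ, m ≤ max M N → dist (h^[m] O) (g (h^[m] O)) ≤ L₂ := by
  intro m hm
  by_cases hmM : m ≤ M
  · exact sync_key k c L hk hc hL hgeo hthin h hh ℓ hℓcont hℓqg hℓequiv O hO hfund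
      L₁ L₂ hL₁ hL₂ g hg M N hgO hgMN m hmM
  · have hmN : m ≤ N := by omega
    have hne : Nonempty X := ⟨O⟩
    set g' := Function.invFun g with hg'def
    have hrg : ∀ x, g (g' x) = x := fun x => Function.rightInverse_invFun hgbij.2 x
    have hg' : Isometry g' := Isometry.of_dist_eq (fun x y => by
      calc dist (g' x) (g' y) = dist (g (g' x)) (g (g' y)) := (hg.dist_eq _ _).symm
        _ = dist x y := by rw [hrg, hrg])
    have h1 : dist O (g' O) ≤ L₁ := by
      calc dist O (g' O) = dist (g O) (g (g' O)) := (hg.dist_eq _ _).symm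
        _ = dist (g O) O := by rw [hrg]
        _ = dist O (g O) := dist_comm _ _
        _ ≤ L₁ := hgO
    have h2 : dist (h^[N] O) (g' (h^[M] O)) ≤ L₁ := by
      calc dist (h^[N] O) (g' (h^[M] O))
          = dist (g (h^[N] O)) (g (g' (h^[M] O))) := (hg.dist_eq _ _).symm
        _ = dist (g (h^[N] O)) (h^[M] O) := by rw [hrg]
        _ = dist (h^[M] O) (g (h^[N] O)) := dist_comm _ _
        _ ≤ L₁ := hgMN
    have h3 := sync_key k c L hk hc hL hgeo hthin h hh ℓ hℓcont hℓqg hℓequiv O hO hfund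
      L₁ L₂ hL₁ hL₂ g' hg' N M h1 h2 m hmN
    calc dist (h^[m] O) (g (h^[m] O))
        = dist (g (g' (h^[m] O))) (g (h^[m] O)) := by rw [hrg]
      _ = dist (g' (h^[m] O)) (h^[m] O) := hg.dist_eq _ _
      _ = dist (h^[m] O) (g' (h^[m] O)) := dist_comm _ _
      _ ≤ L₂ := h3
end

section
/- Let a group Γ act by isometries on a metric space X, let h ∈ Γ, and suppose that for every x ∈ X there exist k ≥ 1 and c ≥ 0 with |m − n| ≤ k·d(h^m·x, h^n·x) + c for all integers m, n. Let S be a subgroup of Γ containing h such that the cyclic subgroup ⟨h⟩ has finite index in S. Assume h satisfies the equivariant acylindricity condition WWPD (1) with respect to S: for every x ∈ X and R > 0 there exists an integer M ≥ 1 such that every subset Z ⊆ Γ is finite whenever (a) each g ∈ Z satisfies d(x, g·x) < R and d(h^M·x, g·(h^M·x)) < R, and (b) no two elements of Z lie in the same left coset of S. Then h satisfies WPD: for every x ∈ X and R > 0 there exists an integer M ≥ 1 such that the set {g ∈ Γ : d(x, g·x) < R and d(h^M·x, g·(h^M·x)) < R} is finite. -/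
/-- Auxiliary: a set is finite if its image in a coset space is finite and
each "coset fiber" is finite. -/
private lemma wwpd_aux_finite_of_quot {Γ : Type*} [Group Γ] (K : Subgroup Γ) (B : Set Γ)
    (himg : ((QuotientGroup.mk : Γ → Γ ⧸ K) '' B).Finite)
    (hfib : ∀ g ∈ B, {g' ∈ B | g⁻¹ * g' ∈ K}.Finite) : B.Finite := by
  have hsub : B ⊆ ⋃ q ∈ ((QuotientGroup.mk : Γ → Γ ⧸ K) '' B),
      {g' ∈ B | (QuotientGroup.mk g' : Γ ⧸ K) = q} := by
    intro g hg
    exact Set.mem_biUnion (Set.mem_image_of_mem _ hg) ⟨hg, rfl⟩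
  refine Set.Finite.subset (Set.Finite.biUnion himg ?_) hsub
  rintro q ⟨g, hgB, rfl⟩
  have heq : {g' ∈ B | (QuotientGroup.mk g' : Γ ⧸ K) = QuotientGroup.mk g}
      = {g' ∈ B | g⁻¹ * g' ∈ K} := by
    ext g'
    simp only [Set.mem_setOf_eq, and_congr_right_iff]
    intro _
    rw [eq_comm, QuotientGroup.eq]
  rw [heq]
  exact hfib g hgB

/-- **WWPD (1) plus `⟨h⟩` of finite index in `S` implies WPD.**
Let a group `Γ` act by isometries on a metric space `X`, let `h ∈ Γ` be such
that every orbit map `n ↦ h^n·x` is a quasi-isometric embedding of `ℤ`, and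
let `S ≤ Γ` contain `h` with `⟨h⟩` of finite index in `S`.  If `h` satisfies
the equivariant acylindricity condition WWPD (1) with respect to `S` (any set
of elements moving `x` and `h^M·x` less than `R` and lying pairwise in distinct
left cosets of `S` is finite), then `h` satisfies WPD (the full set of such
elements is finite). -/
theorem wwpd_finite_index_implies_wpd
    {Γ : Type*} [Group Γ] {X : Type*} [MetricSpace X] [MulAction Γ X]
    (hiso : ∀ (γ : Γ) (p q : X), dist (γ • p) (γ • q) = dist p q)
    (h : Γ)
    (hqi : ∀ x : X, ∃ k c : ℝ, 1 ≤ k ∧ 0 ≤ c ∧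
      ∀ m n : ℤ, |(m : ℝ) - (n : ℝ)| ≤ k * dist (h ^ m • x) (h ^ n • x) + c)
    (S : Subgroup Γ) (hhS : h ∈ S)
    -- the cyclic subgroup `⟨h⟩` has finite index in `S`
    (hfin : (Subgroup.zpowers h).relIndex S ≠ 0)
    -- WWPD (1): equivariant acylindricity with respect to `S`
    (hwwpd : ∀ (x : X) (R : ℝ), 0 < R → ∃ M : ℕ, 1 ≤ M ∧
      ∀ Z : Set Γ,
        (∀ g ∈ Z, dist x (g • x) < R ∧
          dist ((h ^ M : Γ) • x) (g • ((h ^ M : Γ) • x)) < R) →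
        (∀ g₁ ∈ Z, ∀ g₂ ∈ Z, g₁ ≠ g₂ → g₁⁻¹ * g₂ ∉ S) →
        Z.Finite) :
    -- WPD
    ∀ (x : X) (R : ℝ), 0 < R → ∃ M : ℕ, 1 ≤ M ∧
      {g : Γ | dist x (g • x) < R ∧
        dist ((h ^ M : Γ) • x) (g • ((h ^ M : Γ) • x)) < R}.Finite := by
  classical
  intro x R hR
  obtain ⟨M, hM1, hM⟩ := hwwpd x R hR
  refine ⟨M, hM1, ?_⟩
  set B : Set Γ := {g : Γ | dist x (g • x) < R ∧
      dist ((h ^ M : Γ) • x) (g • ((h ^ M : Γ) • x)) < R} with hBdef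
  obtain ⟨k, c, hk1, hc0, hkc⟩ := hqi x
  set T : Subgroup Γ := Subgroup.zpowers h with hTdef
  -- fibers of the ⟨h⟩-coset map are finite
  have hT : ∀ g' ∈ B, {g'' ∈ B | g'⁻¹ * g'' ∈ T}.Finite := by
    intro g' hg'
    have hIcc : ({n : ℤ | |(n : ℝ)| ≤ k * (2 * R) + c}).Finite := by
      apply (Set.finite_Icc (-(⌈k * (2 * R) + c⌉)) ⌈k * (2 * R) + c⌉).subset
      intro n hn
      simp only [Set.mem_setOf_eq] at hn
      obtain ⟨h1, h2⟩ := abs_le.mp hn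
      have hceil := Int.le_ceil (k * (2 * R) + c)
      constructor
      · have hle : ((-⌈k * (2 * R) + c⌉ : ℤ) : ℝ) ≤ (n : ℝ) := by push_cast; linarith
        exact_mod_cast hle
      · have hle : (n : ℝ) ≤ ((⌈k * (2 * R) + c⌉ : ℤ) : ℝ) := le_trans h2 hceil
        exact_mod_cast hle
    apply (hIcc.image (fun n : ℤ => g' * h ^ n)).subset
    rintro g'' ⟨hg''B, hmem⟩
    obtain ⟨n, hn⟩ := Subgroup.mem_zpowers_iff.mp hmem
    have hgeq : g'' = g' * h ^ n := by
      rw [hn]; group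
    refine ⟨n, ?_, hgeq.symm⟩
    have hdist : dist (h ^ n • x) x < 2 * R := by
      have e1 : dist (g' • x) (g'' • x) = dist (h ^ n • x) x := by
        rw [hgeq, mul_smul, hiso, dist_comm]
      have d1 : dist x (g' • x) < R := hg'.1
      have d2 : dist x (g'' • x) < R := hg''B.1
      have := dist_triangle (g' • x) x (g'' • x)
      rw [e1] at this
      rw [dist_comm] at d1
      linarith
    have hb := hkc n 0
    simp only [zpow_zero, one_smul] at hb
    push_cast at hb
    simp only [sub_zero] at hb
    simp only [Set.mem_setOf_eq]
    have hkpos : (0 : ℝ) < k := lt_of_lt_of_le one_pos hk1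
    nlinarith [hb, hdist, mul_lt_mul_of_pos_left hdist hkpos]
  -- the image of B in Γ ⧸ S is finite (WWPD applied to a set of representatives)
  have himgS : ((QuotientGroup.mk : Γ → Γ ⧸ S) '' B).Finite := by
    set Q := (QuotientGroup.mk : Γ → Γ ⧸ S) '' B with hQ
    have hex : ∀ q ∈ Q, ∃ g, g ∈ B ∧ (QuotientGroup.mk g : Γ ⧸ S) = q := fun q hq => hq
    choose! σ hσB hσ using hex
    set Z : Set Γ := σ '' Q with hZ
    have hZB : Z ⊆ B := by
      rintro g ⟨q, hq, rfl⟩; exact hσB q hq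
    have hZfin : Z.Finite := by
      apply hM Z (fun g hg => hZB hg)
      rintro g₁ ⟨q₁, hq₁, rfl⟩ g₂ ⟨q₂, hq₂, rfl⟩ hne hmem
      apply hne
      have : q₁ = q₂ := by
        rw [← hσ q₁ hq₁, ← hσ q₂ hq₂]
        exact (QuotientGroup.eq).mpr hmem
      rw [this]
    have hQZ : Q ⊆ (QuotientGroup.mk : Γ → Γ ⧸ S) '' Z := by
      intro q hq
      exact ⟨σ q, ⟨q, hq, rfl⟩, hσ q hq⟩
    exact (hZfin.image _).subset hQZ
  -- finiteness of S ⧸ ⟨h⟩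
  have hfinQ : Finite (S ⧸ T.subgroupOf S) := by
    have : (T.subgroupOf S).index ≠ 0 := hfin
    rw [Subgroup.index] at this
    exact (Nat.card_ne_zero.mp this).2
  -- main assembly
  apply wwpd_aux_finite_of_quot S B himgS
  intro g hgB
  set F : Set Γ := {g' ∈ B | g⁻¹ * g' ∈ S} with hF
  apply wwpd_aux_finite_of_quot T F
  · -- image of F in Γ ⧸ T is finite
    have hwd : ∀ a b : S, @Setoid.r S (QuotientGroup.leftRel (T.subgroupOf S)) a b →
        (QuotientGroup.mk (g * (a : Γ)) : Γ ⧸ T) = QuotientGroup.mk (g * (b : Γ)) := by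
      intro a b hab
      rw [QuotientGroup.leftRel_apply, Subgroup.mem_subgroupOf] at hab
      refine (QuotientGroup.eq).mpr ?_
      have : (g * (a : Γ))⁻¹ * (g * (b : Γ)) = (a : Γ)⁻¹ * (b : Γ) := by group
      rw [this]
      exact_mod_cast hab
    set ψ : S ⧸ T.subgroupOf S → Γ ⧸ T :=
      fun q => Quotient.liftOn' q (fun s : S => (QuotientGroup.mk (g * (s : Γ)) : Γ ⧸ T)) hwd
      with hψ
    have hsub : ((QuotientGroup.mk : Γ → Γ ⧸ T) '' F) ⊆ Set.range ψ := by
      rintro _ ⟨g', hg'F, rfl⟩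
      refine ⟨QuotientGroup.mk (⟨g⁻¹ * g', hg'F.2⟩ : S), ?_⟩
      show (QuotientGroup.mk (g * (g⁻¹ * g')) : Γ ⧸ T) = QuotientGroup.mk g'
      congr 1
      group
    exact (Set.finite_range ψ).subset hsub
  · -- fibers
    intro g' hg'F
    refine (hT g' hg'F.1).subset ?_
    rintro g'' ⟨hg''F, hmem⟩
    exact ⟨hg''F.1, hmem⟩
end

section
/- Let X be a geodesic metric space that is δ-hyperbolic in the sense of the four-point Gromov product condition. Let a group Γ act on X by isometries, let h ∈ Γ, let S be a subgroup of Γ, let x ∈ X, and let B ≥ 0 be such that for all integers M ≥ 0 and 0 ≤ m ≤ M and every geodesic γ from x to h^M·x, the point h^m·x lies within distance B of the image of γ. Suppose there exists R' > 0 such that for every integer M ≥ 1 there is an infinite subset Z_M ⊆ Γ whose elements pairwise lie in distinct left cosets of S and such that every g ∈ Z_M satisfies d(x, g·x) < R' and d(h^M·x, g·(h^M·x)) < R'. Then there exist R > 0 and a sequence (g_i)_{i∈ℕ} in Γ, pairwise lying in distinct left cosets of S, such that for every integer M ≥ 0 there exists I with d(g_i·(h^m·x), h^m·x) < R for all integers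 0 ≤ m ≤ M and all i ≥ I. -/
/-- From an infinite set whose elements pairwise lie in distinct left cosets of `S`,
we can pick an element avoiding the cosets of any finite list of elements. -/
lemma exists_avoid_cosets {Γ : Type*} [Group Γ] (S : Subgroup Γ) (Z : Set Γ)
    (hZinf : Z.Infinite)
    (hpw : ∀ g₁ ∈ Z, ∀ g₂ ∈ Z, g₁ ≠ g₂ → g₁⁻¹ * g₂ ∉ S) (l : List Γ) :
    ∃ z ∈ Z, ∀ y ∈ l, y⁻¹ * z ∉ S := by
  have hfin : (⋃ y ∈ l, {z ∈ Z | y⁻¹ * z ∈ S}).Finite := by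
    refine Set.Finite.biUnion l.finite_toSet (fun y _ => Set.Subsingleton.finite ?_)
    rintro z1 ⟨hz1, hs1⟩ z2 ⟨hz2, hs2⟩
    by_contra hne
    refine hpw z1 hz1 z2 hz2 hne ?_
    have hkey : (y⁻¹ * z1)⁻¹ * (y⁻¹ * z2) = z1⁻¹ * z2 := by group
    rw [← hkey]
    exact S.mul_mem (S.inv_mem hs1) hs2
  obtain ⟨z, hz⟩ := (hZinf.diff hfin).nonempty
  refine ⟨z, hz.1, fun y hy hmem => hz.2 ?_⟩
  exact Set.mem_biUnion hy ⟨hz.1, hmem⟩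

/-- **Failure of equivariant acylindricity WWPD (1) implies failure of the
variant condition WWPD (3)∃.**
Let `X` be a geodesic metric space which is `δ`-hyperbolic in the four-point
Gromov-product sense, let a group `Γ` act on `X` by isometries, let `h ∈ Γ`,
`S ≤ Γ`, `x ∈ X`, and let `B ≥ 0` be such that every orbit point `h^m·x`
(`0 ≤ m ≤ M`) lies within distance `B` of every geodesic from `x` to `h^M·x`.
If there is `R' > 0` such that for every `M ≥ 1` there is an infinite set
`Z_M ⊆ Γ`, pairwise in distinct left cosets of `S`, each of whose elements
moves `x` and `h^M·x` less than `R'`, then there exist `R > 0` and a sequence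
`(g_i)` in `Γ`, pairwise in distinct left cosets of `S`, such that for every
`M` there is `I` with `d(g_i·(h^m·x), h^m·x) < R` for all `0 ≤ m ≤ M`, `i ≥ I`. -/
theorem wwpd_one_failure_implies_wwpd_three_failure
    {Γ : Type*} [Group Γ] {X : Type*} [MetricSpace X] [MulAction Γ X]
    (hiso : ∀ (γ : Γ) (p q : X), dist (γ • p) (γ • q) = dist p q)
    (δ : ℝ) (hδ0 : 0 ≤ δ)
    -- `X` is `δ`-hyperbolic: four-point Gromov product condition
    (hhyp : ∀ p q r w : X,
      min ((dist p w + dist r w - dist p r) / 2)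
          ((dist q w + dist r w - dist q r) / 2) - δ ≤
        (dist p w + dist q w - dist p q) / 2)
    -- `X` is a geodesic metric space
    (hgeo : ∀ p q : X, ∃ γ : ℝ → X, γ 0 = p ∧ γ (dist p q) = q ∧
        ∀ s ∈ Set.Icc 0 (dist p q), ∀ t ∈ Set.Icc 0 (dist p q),
          dist (γ s) (γ t) = |s - t|)
    (h : Γ) (S : Subgroup Γ) (x : X)
    (B : ℝ) (hB0 : 0 ≤ B)
    -- orbit points fellow-travel geodesics between orbit points
    (hB : ∀ M m : ℕ, m ≤ M → ∀ γ : ℝ → X,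
      γ 0 = x → γ (dist x ((h ^ M : Γ) • x)) = (h ^ M : Γ) • x →
      (∀ s ∈ Set.Icc 0 (dist x ((h ^ M : Γ) • x)),
        ∀ t ∈ Set.Icc 0 (dist x ((h ^ M : Γ) • x)),
          dist (γ s) (γ t) = |s - t|) →
      ∃ s ∈ Set.Icc (0 : ℝ) (dist x ((h ^ M : Γ) • x)),
        dist ((h ^ m : Γ) • x) (γ s) ≤ B)
    (R' : ℝ) (hR' : 0 < R')
    -- failure of WWPD (1): infinitely many coset-distinct small movers
    (hZ : ∀ M : ℕ, 1 ≤ M → ∃ Z : Set Γ, Z.Infinite ∧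
      (∀ g₁ ∈ Z, ∀ g₂ ∈ Z, g₁ ≠ g₂ → g₁⁻¹ * g₂ ∉ S) ∧
      ∀ g ∈ Z, dist x (g • x) < R' ∧
        dist ((h ^ M : Γ) • x) (g • ((h ^ M : Γ) • x)) < R') :
    -- failure of WWPD (3)∃
    ∃ R : ℝ, 0 < R ∧ ∃ g : ℕ → Γ,
      (∀ i j : ℕ, i ≠ j → (g i)⁻¹ * g j ∉ S) ∧
      ∀ M : ℕ, ∃ I : ℕ, ∀ m : ℕ, m ≤ M → ∀ i : ℕ, I ≤ i →
        dist (g i • ((h ^ m : Γ) • x)) ((h ^ m : Γ) • x) < R := by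
  -- Choose the sets `Z` for each `M = n+1`.
  have hZ' : ∀ n : ℕ, ∃ Z : Set Γ, Z.Infinite ∧
      (∀ g₁ ∈ Z, ∀ g₂ ∈ Z, g₁ ≠ g₂ → g₁⁻¹ * g₂ ∉ S) ∧
      ∀ g ∈ Z, dist x (g • x) < R' ∧
        dist ((h ^ (n+1) : Γ) • x) (g • ((h ^ (n+1) : Γ) • x)) < R' :=
    fun n => hZ (n+1) (by omega)
  set ZZ : ℕ → Set Γ := fun n => (hZ' n).choose with hZZdef
  have hZZ := fun n => (hZ' n).choose_spec
  have pick : ∀ (n : ℕ) (l : List Γ), ∃ z ∈ ZZ n, ∀ y ∈ l, y⁻¹ * z ∉ S :=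
    fun n l => exists_avoid_cosets S (ZZ n) (hZZ n).1 (hZZ n).2.1 l
  -- Build the sequence recursively, avoiding previously used cosets.
  set F : ℕ → List Γ :=
    fun n => Nat.rec [] (fun k l => l ++ [(pick k l).choose]) n with hFdef
  set g : ℕ → Γ := fun i => (pick i (F i)).choose with hgdef
  have hFsucc : ∀ n, F (n+1) = F n ++ [g n] := fun n => rfl
  have hgZ : ∀ i, g i ∈ ZZ i := fun i => (pick i (F i)).choose_spec.1
  have hgavoid : ∀ i, ∀ y ∈ F i, y⁻¹ * g i ∉ S :=
    fun i => (pick i (F i)).choose_spec.2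
  have hmem : ∀ j i, j < i → g j ∈ F i := by
    intro j i hji
    induction i with
    | zero => omega
    | succ i ih =>
      rw [hFsucc, List.mem_append]
      rcases Nat.lt_succ_iff_lt_or_eq.mp hji with h' | h'
      · exact Or.inl (ih h')
      · subst h'; exact Or.inr (List.mem_singleton_self _)
  have hdistinct : ∀ i j, i ≠ j → (g i)⁻¹ * g j ∉ S := by
    intro i j hne hmemS
    rcases Nat.lt_or_ge i j with h' | h'
    · exact hgavoid j (g i) (hmem i j h') hmemS
    · have hji : j < i := lt_of_le_of_ne h' (Ne.symm hne)
      refine hgavoid i (g j) (hmem j i hji) ?_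
      have := S.inv_mem hmemS
      simpa [mul_inv_rev] using this
  -- The geometric key lemma.
  have key : ∀ (M m : ℕ), m ≤ M → ∀ gg : Γ, dist x (gg • x) < R' →
      dist ((h ^ M : Γ) • x) (gg • ((h ^ M : Γ) • x)) < R' →
      dist (gg • ((h ^ m : Γ) • x)) ((h ^ m : Γ) • x) < R' + 2*δ + 2*B + 1 := by
    intro M m hm gg hg1 hg2
    obtain ⟨γ, hγ0, hγL, hγiso⟩ := hgeo x ((h ^ M : Γ) • x)
    set L := dist x ((h ^ M : Γ) • x) with hLdef
    obtain ⟨s, hsI, hclose⟩ := hB M m hm γ hγ0 hγL hγiso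
    have hL0 : 0 ≤ L := dist_nonneg
    have h0I : (0:ℝ) ∈ Set.Icc (0:ℝ) L := ⟨le_refl _, hL0⟩
    have hLI : L ∈ Set.Icc (0:ℝ) L := ⟨hL0, le_refl _⟩
    have hs0 : dist (γ s) x = s := by
      rw [← hγ0, hγiso s hsI 0 h0I, sub_zero, abs_of_nonneg hsI.1]
    have hsL : dist (γ s) ((h ^ M : Γ) • x) = L - s := by
      rw [← hγL, hγiso s hsI L hLI, abs_of_nonpos (by linarith [hsI.2]), neg_sub]
    set D := dist (γ s) (gg • γ s) with hDdef
    -- bound `D` using the four-point condition at `w = gg • γ s`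
    have hD : D ≤ R' + 2*δ := by
      have H := hhyp (gg • x) (gg • ((h ^ M : Γ) • x)) (γ s) (gg • γ s)
      have e1 : dist (gg • x) (gg • γ s) = s := by
        rw [hiso, dist_comm, hs0]
      have e2 : dist (gg • ((h ^ M : Γ) • x)) (gg • γ s) = L - s := by
        rw [hiso, dist_comm, hsL]
      have e3 : dist (gg • x) (gg • ((h ^ M : Γ) • x)) = L := by rw [hiso]
      have i1 : dist (gg • x) (γ s) ≤ R' + s := by
        have := dist_triangle (gg • x) x (γ s)
        have hc1 : dist (gg • x) x < R' := by rwa [dist_comm]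
        have hc2 : dist x (γ s) = s := by rw [dist_comm]; exact hs0
        linarith
      have i2 : dist (gg • ((h ^ M : Γ) • x)) (γ s) ≤ R' + (L - s) := by
        have := dist_triangle (gg • ((h ^ M : Γ) • x)) ((h ^ M : Γ) • x) (γ s)
        have hc1 : dist (gg • ((h ^ M : Γ) • x)) ((h ^ M : Γ) • x) < R' := by
          rwa [dist_comm]
        have hc2 : dist ((h ^ M : Γ) • x) (γ s) = L - s := by
          rw [dist_comm]; exact hsL
        linarith
      rw [e1, e2, e3] at H
      have t1 : (D - R')/2 ≤ (s + D - dist (gg • x) (γ s))/2 := by linarith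
      have t2 : (D - R')/2 ≤
          ((L - s) + D - dist (gg • ((h ^ M : Γ) • x)) (γ s))/2 := by linarith
      have hminb := le_min t1 t2
      linarith
    -- conclude via the triangle inequality through `γ s`
    have hclose' : dist (γ s) ((h ^ m : Γ) • x) ≤ B := by
      rw [dist_comm]; exact hclose
    have htri := dist_triangle4 (gg • ((h ^ m : Γ) • x)) (gg • γ s) (γ s)
      ((h ^ m : Γ) • x)
    have e4 : dist (gg • ((h ^ m : Γ) • x)) (gg • γ s)
        = dist ((h ^ m : Γ) • x) (γ s) := hiso gg _ _
    have e5 : dist (gg • γ s) (γ s) = D := by rw [dist_comm]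
    rw [e4, e5] at htri
    linarith
  -- Assemble the conclusion.
  refine ⟨R' + 2*δ + 2*B + 1, by linarith, g, hdistinct, ?_⟩
  intro M
  refine ⟨M, fun m hm i hi => ?_⟩
  have hg := (hZZ i).2.2 (g i) (hgZ i)
  exact key (i+1) m (by omega) (g i) hg.1 hg.2
end
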